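/- Let G = (V,E) with V = {1,...,n}, N_m = {1,...,m}, G*(N_m) as above, 2 ≤ m ≤ n, and U ⊆ N_{m−1} with G*(N_{m−1}) \ U connected. Let γ_m be the set of neighbors of vertex m in G*(N_m). If γ_m − U = ∅, then G*(N_m) \ (U ∪ {m}) is connected while G*(N_m) \ U is disconnected; if |γ_m − U| = 1, then both G*(N_m) \ U and G*(N_m) \ (U ∪ {m}) are connected; and if |γ_m − U| ≥ 2, then G*(N_m) \ U is connected. -/

import Mathlib

/-- The graph `G*(S)` on vertex subset `S`: distinct `u, v ∈ S` are adjacent iff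
there is a path (walk) between `u` and `v` in `G` all of whose intermediate
vertices lie outside `S`. Vertices outside `S` are isolated. -/
def GStar {V : Type} (G : SimpleGraph V) (S : Set V) : SimpleGraph V where
  Adj u v := u ≠ v ∧ u ∈ S ∧ v ∈ S ∧
    ∃ p : G.Walk u v, ∀ x ∈ p.support, x ≠ u → x ≠ v → x ∉ S
  symm := by
    refine ⟨?_⟩
    rintro u v ⟨hne, hu, hv, p, hp⟩
    refine ⟨hne.symm, hv, hu, p.reverse, ?_⟩
    intro x hx hxv hxu
    exact hp x (by simpa [SimpleGraph.Walk.support_reverse] using hx) hxu hxv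
  loopless := ⟨fun u h => h.1 rfl⟩

/-- `a` and `b` are joined by a walk in `G` whose vertices all lie in `A`
(i.e. they are in the same component of the induced subgraph on `A`). -/
def ReachIn {V : Type} (G : SimpleGraph V) (A : Set V) (a b : V) : Prop :=
  ∃ p : G.Walk a b, ∀ x ∈ p.support, x ∈ A

/-- The vertex set `A` is connected in `H` (restricted to `A`). -/
def ConnOn {V : Type} (H : SimpleGraph V) (A : Set V) : Prop :=
  A.Nonempty ∧ ∀ a ∈ A, ∀ b ∈ A, ReachIn H A a b

/-- The vertex set `A` is disconnected in `H` (restricted to `A`). -/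
def DiscOn {V : Type} (H : SimpleGraph V) (A : Set V) : Prop :=
  ∃ a ∈ A, ∃ b ∈ A, ¬ ReachIn H A a b

lemma reachIn_trans {V : Type} {G : SimpleGraph V} {A : Set V} {a b c : V}
    (h1 : ReachIn G A a b) (h2 : ReachIn G A b c) : ReachIn G A a c := by
  obtain ⟨p, hp⟩ := h1; obtain ⟨q, hq⟩ := h2
  refine ⟨p.append q, ?_⟩
  intro x hx
  rw [SimpleGraph.Walk.mem_support_append_iff] at hx
  cases hx with
  | inl h => exact hp x h
  | inr h => exact hq x h

lemma reachIn_symm {V : Type} {G : SimpleGraph V} {A : Set V} {a b : V}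
    (h : ReachIn G A a b) : ReachIn G A b a := by
  obtain ⟨p, hp⟩ := h
  exact ⟨p.reverse, fun x hx => hp x (by simpa [SimpleGraph.Walk.support_reverse] using hx)⟩

lemma reachIn_of_adj {V : Type} {G : SimpleGraph V} {A : Set V} {a b : V} (h : G.Adj a b)
    (ha : a ∈ A) (hb : b ∈ A) : ReachIn G A a b := by
  refine ⟨SimpleGraph.Walk.cons h SimpleGraph.Walk.nil, ?_⟩
  intro x hx
  simp only [SimpleGraph.Walk.support_cons, SimpleGraph.Walk.support_nil,
    List.mem_cons, List.mem_singleton] at hx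
  rcases hx with rfl | rfl | h'
  · exact ha
  · exact hb
  · exact absurd h' List.not_mem_nil

lemma reachIn_transport {V : Type} {G H : SimpleGraph V} {A B : Set V}
    (hAB : A ⊆ B)
    (hedge : ∀ u v : V, u ∈ A → v ∈ A → G.Adj u v → ReachIn H B u v)
    {a b : V} (h : ReachIn G A a b) : ReachIn H B a b := by
  obtain ⟨p, hp⟩ := h
  induction p with
  | nil =>
    refine ⟨SimpleGraph.Walk.nil, ?_⟩
    intro x hx
    simp only [SimpleGraph.Walk.support_nil, List.mem_singleton] at hx
    subst hx
    exact hAB (hp _ (by simp))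
  | cons hadj q ih =>
    refine reachIn_trans (hedge _ _ (hp _ (by simp)) (hp _ (by simp)) hadj) (ih ?_)
    intro x hx
    exact hp x (by simp [hx])

lemma gstar_edge_up {n : ℕ} (G : SimpleGraph (Fin n)) (m : ℕ) (hm : 2 ≤ m) (hmn : m ≤ n)
    {u v : Fin n} (hu : (u : ℕ) < m - 1) (hv : (v : ℕ) < m - 1)
    (h : (GStar G {i : Fin n | (i : ℕ) < m - 1}).Adj u v) :
    (GStar G {i : Fin n | (i : ℕ) < m}).Adj u v ∨
      ((GStar G {i : Fin n | (i : ℕ) < m}).Adj u ⟨m - 1, by omega⟩ ∧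
       (GStar G {i : Fin n | (i : ℕ) < m}).Adj ⟨m - 1, by omega⟩ v) := by
  obtain ⟨hne, hu', hv', p, hp⟩ := h
  set vm : Fin n := ⟨m - 1, by omega⟩ with hvmdef
  have hq : ∀ x ∈ p.bypass.support, x ≠ u → x ≠ v → ¬ (x : ℕ) < m - 1 := fun x hx hxu hxv =>
    hp x (p.support_bypass_subset hx) hxu hxv
  have hqpath : p.bypass.IsPath := p.bypass_isPath
  set q := p.bypass with hqdef
  by_cases hvm : vm ∈ q.support
  · right
    have hsupp : q.support =
        (q.takeUntil vm hvm).support ++ (q.dropUntil vm hvm).support.tail := by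
      rw [← SimpleGraph.Walk.support_append, SimpleGraph.Walk.take_spec]
    have hnodup : q.support.Nodup := hqpath.support_nodup
    rw [hsupp] at hnodup
    have hdisj := (List.nodup_append.mp hnodup).2.2
    have hdcons : (q.dropUntil vm hvm).support
        = vm :: (q.dropUntil vm hvm).support.tail :=
      SimpleGraph.Walk.support_eq_cons _
    have hvnot : v ∉ (q.takeUntil vm hvm).support := by
      intro hvt
      have hvd : v ∈ (q.dropUntil vm hvm).support := SimpleGraph.Walk.end_mem_support _
      rw [hdcons] at hvd
      rcases List.mem_cons.mp hvd with h1 | h1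
      · rw [h1] at hv; simp [hvmdef] at hv
      · exact hdisj v hvt v h1 rfl
    have hunot : u ∉ (q.dropUntil vm hvm).support.tail := by
      intro hud
      exact hdisj u (SimpleGraph.Walk.start_mem_support _) u hud rfl
    have huvm : u ≠ vm := by intro hh; rw [hh] at hu; simp [hvmdef] at hu
    have hvvm : v ≠ vm := by intro hh; rw [hh] at hv; simp [hvmdef] at hv
    constructor
    · refine ⟨huvm, by simpa using (by omega : (u:ℕ) < m), by simp [hvmdef]; omega,
        q.takeUntil vm hvm, ?_⟩
      intro x hx hxu hxvm
      have hxq : x ∈ q.support := q.support_takeUntil_subset hvm hx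
      have hxv : x ≠ v := fun hh => hvnot (hh ▸ hx)
      have h1 : ¬ (x : ℕ) < m - 1 := hq x hxq hxu hxv
      have h2 : (x : ℕ) ≠ m - 1 := fun hh => hxvm (Fin.ext (by simp [hvmdef, hh]))
      simp only [Set.mem_setOf_eq]
      omega
    · refine ⟨fun hh => hvvm hh.symm, by simp [hvmdef]; omega,
        by simpa using (by omega : (v:ℕ) < m), q.dropUntil vm hvm, ?_⟩
      intro x hx hxvm hxv
      have hxq : x ∈ q.support := q.support_dropUntil_subset hvm hx
      have hxu : x ≠ u := by
        intro hh
        subst hh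
        rw [hdcons] at hx
        rcases List.mem_cons.mp hx with h1 | h1
        · exact huvm h1
        · exact hunot h1
      have h1 : ¬ (x : ℕ) < m - 1 := hq x hxq hxu hxv
      have h2 : (x : ℕ) ≠ m - 1 := fun hh => hxvm (Fin.ext (by simp [hvmdef, hh]))
      simp only [Set.mem_setOf_eq]
      omega
  · left
    refine ⟨hne, by simpa using (by omega : (u:ℕ) < m), by simpa using (by omega : (v:ℕ) < m),
      q, ?_⟩
    intro x hx hxu hxv
    have h1 : ¬ (x : ℕ) < m - 1 := hq x hx hxu hxv
    have h2 : (x : ℕ) ≠ m - 1 := by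
      intro hh
      exact hvm (show vm ∈ q.support from (Fin.ext (by simp [hvmdef, hh]) : x = vm) ▸ hx)
    simp only [Set.mem_setOf_eq]
    omega

/-- With `V = Fin n`, `N_m` the first `m` vertices, `U ⊆ N_{m−1}`
with `G*(N_{m−1}) \ U` connected, and `γ_m` the set of neighbors of the last
vertex `m` of `N_m` in `G*(N_m)`:
* if `γ_m − U = ∅`, then `G*(N_m) \ (U ∪ {m})` is connected and `G*(N_m) \ U`
  is disconnected;
* if `|γ_m − U| = 1`, then both `G*(N_m) \ U` and `G*(N_m) \ (U ∪ {m})` are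
  connected;
* if `|γ_m − U| ≥ 2`, then `G*(N_m) \ U` is connected. -/
theorem stmt_19 {n : ℕ} (G : SimpleGraph (Fin n)) (m : ℕ)
    (hm : 2 ≤ m) (hmn : m ≤ n)
    (U : Set (Fin n)) (hU : ∀ u ∈ U, (u : ℕ) < m - 1)
    (hconn : ConnOn (GStar G {i : Fin n | (i : ℕ) < m - 1})
      ({i : Fin n | (i : ℕ) < m - 1} \ U))
    (γ : Set (Fin n))
    (hγ : γ = {j : Fin n |
      (GStar G {i : Fin n | (i : ℕ) < m}).Adj j (⟨m - 1, by omega⟩ : Fin n)}) :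
    ((γ \ U) = ∅ →
      ConnOn (GStar G {i : Fin n | (i : ℕ) < m})
        ({i : Fin n | (i : ℕ) < m} \ (U ∪ {(⟨m - 1, by omega⟩ : Fin n)})) ∧
      DiscOn (GStar G {i : Fin n | (i : ℕ) < m})
        ({i : Fin n | (i : ℕ) < m} \ U)) ∧
    ((γ \ U).ncard = 1 →
      ConnOn (GStar G {i : Fin n | (i : ℕ) < m})
        ({i : Fin n | (i : ℕ) < m} \ U) ∧
      ConnOn (GStar G {i : Fin n | (i : ℕ) < m})
        ({i : Fin n | (i : ℕ) < m} \ (U ∪ {(⟨m - 1, by omega⟩ : Fin n)}))) ∧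
    (2 ≤ (γ \ U).ncard →
      ConnOn (GStar G {i : Fin n | (i : ℕ) < m})
        ({i : Fin n | (i : ℕ) < m} \ U)) := by
  set vm : Fin n := ⟨m - 1, by omega⟩ with hvmdef
  set S' : Set (Fin n) := {i : Fin n | (i : ℕ) < m - 1} with hS'def
  set S : Set (Fin n) := {i : Fin n | (i : ℕ) < m} with hSdef
  have hvmval : (vm : ℕ) = m - 1 := rfl
  have hvmU : vm ∉ U := fun h => by have := hU _ h; omega
  have hvmS : vm ∈ S := by simp [hSdef]; omega
  -- set identities
  have hsets1 : S \ (U ∪ {vm}) = S' \ U := by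
    ext i
    simp only [Set.mem_diff, Set.mem_union, Set.mem_singleton_iff, not_or,
      hSdef, hS'def, Set.mem_setOf_eq]
    constructor
    · rintro ⟨h1, h2, h3⟩
      have : (i : ℕ) ≠ m - 1 := fun hh => h3 (Fin.ext (by rw [hh, hvmval]))
      exact ⟨by omega, h2⟩
    · rintro ⟨h1, h2⟩
      refine ⟨by omega, h2, fun hh => ?_⟩
      rw [hh, hvmval] at h1; omega
  have hsets2 : S \ U = (S' \ U) ∪ {vm} := by
    ext i
    simp only [Set.mem_diff, Set.mem_union, Set.mem_singleton_iff,
      hSdef, hS'def, Set.mem_setOf_eq]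
    constructor
    · rintro ⟨h1, h2⟩
      by_cases hh : (i : ℕ) = m - 1
      · exact Or.inr (Fin.ext (by rw [hh, hvmval]))
      · exact Or.inl ⟨by omega, h2⟩
    · rintro (⟨h1, h2⟩ | rfl)
      · exact ⟨by omega, h2⟩
      · exact ⟨by omega, hvmU⟩
  have hsubB : S' \ U ⊆ (S' \ U) ∪ {vm} := Set.subset_union_left
  -- facts about γ
  have hγmem : ∀ j ∈ γ, (j : ℕ) < m - 1 ∧ (GStar G S).Adj j vm := by
    intro j hj
    rw [hγ, Set.mem_setOf_eq] at hj
    refine ⟨?_, hj⟩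
    obtain ⟨hne, hjS, -, -⟩ := hj
    have : (j : ℕ) ≠ m - 1 := fun hh => hne (Fin.ext (by rw [hh, hvmval]))
    have : (j : ℕ) < m := hjS
    omega
  -- general reach within (S'\U) ∪ {vm}
  have hreachU : ∀ a ∈ S' \ U, ∀ b ∈ S' \ U, ReachIn (GStar G S) ((S' \ U) ∪ {vm}) a b := by
    intro a ha b hb
    refine reachIn_transport hsubB ?_ (hconn.2 a ha b hb)
    intro u v hu hv hadj
    rcases gstar_edge_up G m hm hmn hu.1 hv.1 hadj with h | ⟨h1, h2⟩
    · exact reachIn_of_adj h (hsubB hu) (hsubB hv)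
    · exact reachIn_trans
        (reachIn_of_adj h1 (hsubB hu) (Or.inr rfl))
        (reachIn_of_adj h2 (Or.inr rfl) (hsubB hv))
  -- when γ \ U is "small", all converted edges stay within S'\U
  have hsmall_conn : (∀ a b : Fin n, a ∈ γ \ U → b ∈ γ \ U → a = b) →
      ConnOn (GStar G S) (S' \ U) := by
    intro hsmall
    refine ⟨hconn.1, ?_⟩
    intro a ha b hb
    refine reachIn_transport (subset_refl _) ?_ (hconn.2 a ha b hb)
    intro u v hu hv hadj
    rcases gstar_edge_up G m hm hmn hu.1 hv.1 hadj with h | ⟨h1, h2⟩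
    · exact reachIn_of_adj h hu hv
    · exfalso
      have huγ : u ∈ γ \ U := ⟨by rw [hγ]; exact h1, hu.2⟩
      have hvγ : v ∈ γ \ U := ⟨by rw [hγ]; exact h2.symm, hv.2⟩
      exact hadj.1 (hsmall u v huγ hvγ)
  -- connectivity of S \ U when γ \ U is nonempty
  have hbig_conn : (γ \ U).Nonempty → ConnOn (GStar G S) (S \ U) := by
    rintro ⟨j, hjγ, hjU⟩
    have hj1 := hγmem j hjγ
    have hjB : j ∈ S' \ U := ⟨hj1.1, hjU⟩
    have hvmj : ReachIn (GStar G S) ((S' \ U) ∪ {vm}) vm j :=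
      reachIn_of_adj hj1.2.symm (Or.inr rfl) (Or.inl hjB)
    rw [hsets2]
    refine ⟨⟨vm, Or.inr rfl⟩, ?_⟩
    rintro a (ha | rfl) b (hb | rfl)
    · exact hreachU a ha b hb
    · exact reachIn_symm (reachIn_trans hvmj (hreachU j hjB a ha))
    · exact reachIn_trans hvmj (hreachU j hjB b hb)
    · exact ⟨SimpleGraph.Walk.nil, by simp⟩
  refine ⟨?_, ?_, ?_⟩
  · -- γ \ U = ∅
    intro h0
    constructor
    · rw [show ({i : Fin n | (i : ℕ) < m} \ (U ∪ {(⟨m - 1, by omega⟩ : Fin n)})) = S' \ U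
        from hsets1]
      exact hsmall_conn (fun a b ha _ => by rw [h0] at ha; exact absurd ha (Set.notMem_empty a))
    · obtain ⟨a, ha⟩ := hconn.1
      have havm : a ≠ vm := by
        intro hh; have := ha.1; rw [hh] at this
        simp only [hS'def, Set.mem_setOf_eq, hvmval] at this; omega
      have haS : a ∈ S \ U := by
        have h' := ha.1
        simp only [hS'def, Set.mem_setOf_eq] at h'
        exact ⟨by simp only [hSdef, Set.mem_setOf_eq]; omega, ha.2⟩
      refine ⟨vm, ⟨hvmS, hvmU⟩, a, haS, ?_⟩
      rintro ⟨p, hp⟩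
      cases p with
      | nil => exact havm rfl
      | cons hadj q =>
        rename_i w
        have hwS : w ∈ S \ U := hp w (by simp)
        have hwγ : w ∈ γ \ U := ⟨by rw [hγ]; exact hadj.symm, hwS.2⟩
        rw [h0] at hwγ
        exact absurd hwγ (Set.notMem_empty w)
  · -- ncard = 1
    intro h1
    obtain ⟨j, hj⟩ := Set.ncard_eq_one.mp h1
    constructor
    · exact hbig_conn ⟨j, by rw [hj]; rfl⟩
    · rw [show ({i : Fin n | (i : ℕ) < m} \ (U ∪ {(⟨m - 1, by omega⟩ : Fin n)})) = S' \ U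
        from hsets1]
      refine hsmall_conn ?_
      intro a b ha hb
      rw [hj] at ha hb
      rw [ha, hb]
  · -- ncard ≥ 2
    intro h2
    exact hbig_conn (Set.nonempty_of_ncard_ne_zero (by omega))
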